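/- For every positive integer N, if n = 2 + 2^(N-1), then there exists a subset S of {0,1}^n with |S| = N that is shattered by the class H_n of cubic monomials; moreover the shattering can be achieved using only monomials of the form x_1 ∧ x_2 ∧ x_m^a with 3 ≤ m ≤ n and a ∈ {0,1}. -/

import Mathlib

open Finset in
lemma sum_bits_lt (b : ℕ → Bool) (k : ℕ) :
    (∑ t ∈ Finset.range k, (b t).toNat * 2 ^ t) < 2 ^ k := by
  induction k with
  | zero => simp
  | succ k ih =>
    rw [Finset.sum_range_succ]
    have : (b k).toNat ≤ 1 := Bool.toNat_le (b k)
    have h2 : (0:ℕ) < 2 ^ k := Nat.pow_pos (by norm_num)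
    have hb : (b k).toNat * 2 ^ k ≤ 2 ^ k := by nlinarith
    rw [pow_succ]
    omega

open Finset in
lemma testBit_sum_bits (b : ℕ → Bool) (k j : ℕ) :
    Nat.testBit (∑ t ∈ Finset.range k, (b t).toNat * 2 ^ t) j
      = (decide (j < k) && b j) := by
  induction k generalizing j with
  | zero => simp
  | succ k ih =>
    rw [Finset.sum_range_succ]
    rcases lt_trichotomy j k with hj | hj | hj
    · rw [show (∑ t ∈ Finset.range k, (b t).toNat * 2 ^ t) + (b k).toNat * 2 ^ k
          = (b k).toNat * 2 ^ k + ∑ t ∈ Finset.range k, (b t).toNat * 2 ^ t by ring]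
      cases hb : b k with
      | false => simpa [hb] using (ih j).trans (by simp [hj]; omega)
      | true =>
        rw [Bool.toNat_true, one_mul, Nat.testBit_two_pow_add_gt hj]
        rw [ih j]
        simp [hj]; omega
    · subst hj
      rw [show (∑ t ∈ Finset.range j, (b t).toNat * 2 ^ t) + (b j).toNat * 2 ^ j
          = 2 ^ j * (b j).toNat + ∑ t ∈ Finset.range j, (b t).toNat * 2 ^ t by ring]
      rw [Nat.testBit_mul_two_pow_add_eq]
      rw [Nat.testBit_lt_two_pow (sum_bits_lt b j)]
      cases b j <;> simp
    · have hlt : (∑ t ∈ Finset.range k, (b t).toNat * 2 ^ t) + (b k).toNat * 2 ^ k < 2 ^ j := by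
        calc _ < 2 ^ (k+1) := by
              have := sum_bits_lt b (k+1)
              rwa [Finset.sum_range_succ] at this
          _ ≤ 2 ^ j := Nat.pow_le_pow_right (by norm_num) (by omega)
      rw [Nat.testBit_lt_two_pow hlt]
      simp; omega


/-- `h : {0,1}^n → {0,1}` is a cubic monomial: `h x = x_i^a ∧ x_j^b ∧ x_k^c`
for some `i < j < k` and exponents `a b c`, where `x^1 = x`, `x^0 = 1 - x`
(so the literal `x_i^a` is true iff `x i = a`). -/
def IsCubicMonomial (n : ℕ) (h : (Fin n → Bool) → Bool) : Prop :=
  ∃ (i j k : Fin n) (a b c : Bool), i < j ∧ j < k ∧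
    ∀ x, h x = ((x i == a) && (x j == b) && (x k == c))

/-- The class `H_n` of cubic monomials on `{0,1}^n`. -/
def cubicMonomials (n : ℕ) : Set ((Fin n → Bool) → Bool) :=
  {h | IsCubicMonomial n h}

/-- A class `H` of Boolean functions shatters a finite set `S` if every
labeling of `S` is realized by some member of `H`. -/
def Shatters {α : Type*} (H : Set (α → Bool)) (S : Finset α) : Prop :=
  ∀ y : α → Bool, ∃ h ∈ H, ∀ x ∈ S, h x = y x

/-- For every positive `N`, if `n = 2 + 2^(N-1)` then there is a subset `S ⊆ {0,1}^n`
of cardinality `N` shattered by the class of cubic monomials; moreover the shattering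
is achieved using only monomials of the form `x_1 ∧ x_2 ∧ x_m^a` with `3 ≤ m ≤ n`
(indices written 0-based: `x_1, x_2` are coordinates `0, 1` and `m` has `2 ≤ m < n`). -/
theorem stmt0 (N : ℕ) (hN : 0 < N) (n : ℕ) (hn : n = 2 + 2 ^ (N - 1)) :
    ∃ S : Finset (Fin n → Bool), S.card = N ∧
      Shatters (cubicMonomials n) S ∧
      Shatters {h : (Fin n → Bool) → Bool |
        ∃ (m : Fin n) (a : Bool), 2 ≤ (m : ℕ) ∧
          ∀ x, h x = (x ⟨0, by subst hn; have : 0 < 2 ^ (N-1) := Nat.pow_pos (by norm_num : 0 < 2); omega⟩ && x ⟨1, by subst hn; have : 0 < 2 ^ (N-1) := Nat.pow_pos (by norm_num : 0 < 2); omega⟩ && (x m == a))} S := by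

  classical
  have hpow : 0 < 2 ^ (N - 1) := Nat.pow_pos (by norm_num)
  have hn3 : 3 ≤ n := by omega
  set P : ℕ → (Fin n → Bool) := fun t m =>
    if (m : ℕ) < 2 then true
    else if t = 0 then true
    else Nat.testBit ((m : ℕ) - 2) (t - 1) with hP
  have hne : ∀ t t', t < t' → t' < N → P t ≠ P t' := by
    intro t t' htt' ht' hEq
    rcases Nat.eq_zero_or_pos t with rfl | htpos
    · have h2 := congrFun hEq ⟨2, by omega⟩
      simp [hP, (by omega : ¬ t' = 0)] at h2
      omega
    · have hp1 : 0 < 2 ^ (t - 1) := Nat.pow_pos (by norm_num)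
      have hplt : 2 ^ (t - 1) < 2 ^ (N - 1) :=
        Nat.pow_lt_pow_right (by norm_num) (by omega)
      have hb : 2 + 2 ^ (t - 1) < n := by omega
      have h2 := congrFun hEq ⟨2 + 2 ^ (t - 1), hb⟩
      simp only [hP, Fin.val_mk] at h2
      rw [if_neg (by omega), if_neg (by omega), if_neg (by omega),
        show 2 + 2 ^ (t - 1) - 2 = 2 ^ (t - 1) by omega,
        Nat.testBit_two_pow_self, Nat.testBit_two_pow_of_ne (by omega)] at h2
      simp at h2
      omega
  have hinj : Set.InjOn P (Finset.range N : Set ℕ) := by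
    intro t ht t' ht' hEq
    simp only [Finset.coe_range, Set.mem_Iio] at ht ht'
    by_contra hcon
    rcases lt_or_gt_of_ne hcon with h | h
    · exact hne t t' h ht' hEq
    · exact hne t' t h ht hEq.symm
  refine ⟨(Finset.range N).image P, ?_, ?_, ?_⟩
  · rw [Finset.card_image_of_injOn hinj, Finset.card_range]
  all_goals {
    intro y
    set a := y (P 0) with ha
    set b : ℕ → Bool := fun i => y (P (i + 1)) == a with hb
    set M := ∑ t ∈ Finset.range (N - 1), (b t).toNat * 2 ^ t with hM
    have hMlt : M < 2 ^ (N - 1) := sum_bits_lt b (N - 1)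
    have hmn : 2 + M < n := by omega
    have key : ∀ x ∈ (Finset.range N).image P,
        (x ⟨0, by omega⟩ && x ⟨1, by omega⟩ && (x ⟨2 + M, hmn⟩ == a)) = y x := by
      intro x hx
      rcases Finset.mem_image.mp hx with ⟨t, ht, rfl⟩
      simp only [Finset.mem_range] at ht
      have h0 : P t ⟨0, by omega⟩ = true := by simp [hP]
      have h1 : P t ⟨1, by omega⟩ = true := by simp [hP]
      rw [h0, h1]
      simp only [Bool.true_and]
      rcases Nat.eq_zero_or_pos t with rfl | htpos
      · have hv : P 0 ⟨2 + M, hmn⟩ = true := by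
          simp [hP, (by omega : ¬ (2 + M < 2))]
        rw [hv, ← ha]
        cases a <;> rfl
      · have hv : P t ⟨2 + M, hmn⟩ = Nat.testBit M (t - 1) := by
          simp [hP, (by omega : ¬ (2 + M < 2)), (by omega : ¬ t = 0),
            show 2 + M - 2 = M by omega]
          rw [decide_eq_false (by omega : ¬ 2 + M ≤ 1), decide_eq_false (by omega : ¬ t = 0)]; rfl
        rw [hv, hM, testBit_sum_bits]
        have htN : t - 1 < N - 1 := by omega
        rw [decide_eq_true htN, Bool.true_and, hb]
        simp only []
        rw [show t - 1 + 1 = t by omega]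
        cases hyy : y (P t) <;> cases haa : a <;> simp [hyy, haa]
    first
    | exact ⟨fun x => x ⟨0, by omega⟩ && x ⟨1, by omega⟩ && (x ⟨2 + M, hmn⟩ == a),
        ⟨⟨0, by omega⟩, ⟨1, by omega⟩, ⟨2 + M, hmn⟩, true, true, a,
          by simp only [Fin.lt_def, Fin.val_mk]; omega,
          by simp only [Fin.lt_def, Fin.val_mk]; omega,
          fun x => by simp⟩, key⟩
    | exact ⟨fun x => x ⟨0, by omega⟩ && x ⟨1, by omega⟩ && (x ⟨2 + M, hmn⟩ == a),
        ⟨⟨2 + M, hmn⟩, a, by simp, fun x => rfl⟩, key⟩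
  }
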